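/- Let F be a convex class of probability distributions, T : F → ℝ a max-functional, and T' : F → A' ⊆ ℝ^m an elicitable functional such that there is no function f : A' → ℝ with T = f ∘ T'. Then T is not conditionally elicitable given T': there exists z ∈ A' such that the restriction of T to F_z = {F ∈ F : T'(F) = z} is not elicitable. -/

import Mathlib

open MeasureTheory

/-- The mixture `l • μ + (1-l) • ν` of two measures. -/
noncomputable def mix {O : Type*} [MeasurableSpace O] (μ ν : Measure O) (l : ℝ) : Measure O :=
  ENNReal.ofReal l • μ + ENNReal.ofReal (1 - l) • ν

/-- `S` is a strictly `𝓕`-consistent scoring function for the functional `T`. -/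
def StrictlyConsistent {O A : Type*} [MeasurableSpace O]
    (𝓕 : Set (Measure O)) (T : Measure O → A) (S : A → O → ℝ) : Prop :=
  (∀ x, ∀ F ∈ 𝓕, Integrable (S x) F) ∧
  (∀ x, ∀ F ∈ 𝓕, ∫ y, S (T F) y ∂F ≤ ∫ y, S x y ∂F) ∧
  (∀ x, ∀ F ∈ 𝓕, ∫ y, S x y ∂F = ∫ y, S (T F) y ∂F → x = T F)


/-- `T` is a max-functional on the class `𝓕`. -/
def MaxFunctional {O : Type*} [MeasurableSpace O]
    (𝓕 : Set (Measure O)) (T : Measure O → ℝ) : Prop :=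
  ∀ F₀ ∈ 𝓕, ∀ F₁ ∈ 𝓕, ∀ l ∈ Set.Ioo (0:ℝ) 1, T (mix F₁ F₀ l) = max (T F₀) (T F₁)

/-- Integral against a mixture is the mixture of integrals. -/
lemma integral_mix {O : Type*} [MeasurableSpace O] (μ ν : Measure O) {l : ℝ}
    (hl : l ∈ Set.Ioo (0:ℝ) 1) (f : O → ℝ) (hμ : Integrable f μ) (hν : Integrable f ν) :
    ∫ y, f y ∂(mix μ ν l) = l * ∫ y, f y ∂μ + (1 - l) * ∫ y, f y ∂ν := by
  have h1 : Integrable f (ENNReal.ofReal l • μ) :=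
    hμ.smul_measure ENNReal.ofReal_ne_top
  have h2 : Integrable f (ENNReal.ofReal (1 - l) • ν) :=
    hν.smul_measure ENNReal.ofReal_ne_top
  rw [mix, integral_add_measure h1 h2, integral_smul_measure, integral_smul_measure,
    ENNReal.toReal_ofReal hl.1.le, ENNReal.toReal_ofReal (by linarith [hl.2])]
  simp [smul_eq_mul]

/-- A non-constant max-functional on a convex class admits no strictly
consistent scoring function. -/
lemma max_aux {O : Type*} [MeasurableSpace O] (𝓖 : Set (Measure O)) (T : Measure O → ℝ)
    (hconvG : ∀ G₀ ∈ 𝓖, ∀ G₁ ∈ 𝓖, ∀ l ∈ Set.Ioo (0:ℝ) 1, mix G₁ G₀ l ∈ 𝓖)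
    (hmaxG : ∀ G₀ ∈ 𝓖, ∀ G₁ ∈ 𝓖, ∀ l ∈ Set.Ioo (0:ℝ) 1,
      T (mix G₁ G₀ l) = max (T G₀) (T G₁))
    {G₀ G₁ : Measure O} (h₀ : G₀ ∈ 𝓖) (h₁ : G₁ ∈ 𝓖) (hlt : T G₀ < T G₁)
    (S : ℝ → O → ℝ) (hS : StrictlyConsistent 𝓖 T S) : False := by
  obtain ⟨hint, hcons, hstrict⟩ := hS
  have hδ' : ∫ y, S (T G₀) y ∂G₀ < ∫ y, S (T G₁) y ∂G₀ := by
    rcases lt_or_eq_of_le (hcons (T G₁) G₀ h₀) with h | h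
    · exact h
    · exact absurd (hstrict (T G₁) G₀ h₀ h.symm) (ne_of_gt hlt)
  have hc' : ∫ y, S (T G₁) y ∂G₁ ≤ ∫ y, S (T G₀) y ∂G₁ := hcons (T G₀) G₁ h₁
  set δ := ∫ y, S (T G₁) y ∂G₀ - ∫ y, S (T G₀) y ∂G₀ with hδdef
  set c := ∫ y, S (T G₀) y ∂G₁ - ∫ y, S (T G₁) y ∂G₁ with hcdef
  have hδpos : 0 < δ := by rw [hδdef]; linarith
  have hcnn : 0 ≤ c := by rw [hcdef]; linarith
  set l := δ / (2 * (c + δ)) with hldef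
  have hden : 0 < 2 * (c + δ) := by linarith
  have hl : l ∈ Set.Ioo (0:ℝ) 1 := by
    constructor
    · exact div_pos hδpos hden
    · rw [hldef, div_lt_one hden]; linarith
  have hmem := hconvG G₀ h₀ G₁ h₁ l hl
  have hTval : T (mix G₁ G₀ l) = T G₁ := by
    rw [hmaxG G₀ h₀ G₁ h₁ l hl]; exact max_eq_right hlt.le
  have hkey := hcons (T G₀) (mix G₁ G₀ l) hmem
  rw [hTval, integral_mix G₁ G₀ hl _ (hint (T G₁) G₁ h₁) (hint (T G₁) G₀ h₀),
    integral_mix G₁ G₀ hl _ (hint (T G₀) G₁ h₁) (hint (T G₀) G₀ h₀)] at hkey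
  have hl2 : l * (2 * (c + δ)) = δ := div_mul_cancel₀ δ (ne_of_gt hden)
  nlinarith [hkey, hl2, hδpos, hl.1, hl.2]

/-- A max-functional that admits no link function through an elicitable `T'`
is not conditionally elicitable given `T'`: on some level set of `T'` the
restriction of `T` admits no strictly consistent scoring function. -/
theorem max_functional_not_conditionally_elicitable
    {O : Type*} [MeasurableSpace O]
    (𝓕 : Set (Measure O)) (hprob : ∀ F ∈ 𝓕, IsProbabilityMeasure F)
    (hconv : ∀ F ∈ 𝓕, ∀ G ∈ 𝓕, ∀ l ∈ Set.Ioo (0:ℝ) 1, mix F G l ∈ 𝓕)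
    (T : Measure O → ℝ) (hmax : MaxFunctional 𝓕 T)
    (m : ℕ) (T' : Measure O → (Fin m → ℝ))
    (helic : ∃ S : (Fin m → ℝ) → O → ℝ, StrictlyConsistent 𝓕 T' S)
    (hnolink : ¬ ∃ f : (Fin m → ℝ) → ℝ, ∀ F ∈ 𝓕, T F = f (T' F)) :
    ∃ z : Fin m → ℝ, ¬ ∃ S : ℝ → O → ℝ,
      StrictlyConsistent {F ∈ 𝓕 | T' F = z} T S := by
  classical
  obtain ⟨S', hS'int, hS'cons, hS'strict⟩ := helic
  push_neg at hnolink
  -- Build a candidate link by choosing a representative in each level set.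
  set f : (Fin m → ℝ) → ℝ := fun z =>
    if h : ∃ F, F ∈ 𝓕 ∧ T' F = z then T h.choose else 0 with hf
  obtain ⟨F₁, hF₁, hne⟩ := hnolink f
  have hex : ∃ F, F ∈ 𝓕 ∧ T' F = T' F₁ := ⟨F₁, hF₁, rfl⟩
  obtain ⟨hF₀, hT'F₀⟩ := hex.choose_spec
  set F₀ := hex.choose with hF₀def
  have hfval : f (T' F₁) = T F₀ := by rw [hf]; simp only [dif_pos hex]; rfl
  have hTne : T F₀ ≠ T F₁ := by
    intro h
    exact hne (by rw [hfval, h])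
  refine ⟨T' F₁, ?_⟩
  set z := T' F₁ with hzdef
  set 𝓖 : Set (Measure O) := {F ∈ 𝓕 | T' F = z} with hGdef
  -- The level set is convex: 𝓕 is convex and T' is constant on level sets
  -- of mixtures by strict consistency of S'.
  have hGconv : ∀ G₀ ∈ 𝓖, ∀ G₁ ∈ 𝓖, ∀ l ∈ Set.Ioo (0:ℝ) 1, mix G₁ G₀ l ∈ 𝓖 := by
    rintro G₀ ⟨hG₀, hz₀⟩ G₁ ⟨hG₁, hz₁⟩ l hl
    have hmem : mix G₁ G₀ l ∈ 𝓕 := hconv G₁ hG₁ G₀ hG₀ l hl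
    refine ⟨hmem, ?_⟩
    set F := mix G₁ G₀ l with hFdef
    have hexp : ∀ x, ∫ y, S' x y ∂F
        = l * ∫ y, S' x y ∂G₁ + (1 - l) * ∫ y, S' x y ∂G₀ :=
      fun x => integral_mix G₁ G₀ hl _ (hS'int x G₁ hG₁) (hS'int x G₀ hG₀)
    have h1 : ∫ y, S' (T' F) y ∂F ≤ ∫ y, S' z y ∂F := hS'cons z F hmem
    have h2 : ∫ y, S' z y ∂G₀ ≤ ∫ y, S' (T' F) y ∂G₀ := by
      have h := hS'cons (T' F) G₀ hG₀
      rwa [hz₀] at h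
    have h3 : ∫ y, S' z y ∂G₁ ≤ ∫ y, S' (T' F) y ∂G₁ := by
      have h := hS'cons (T' F) G₁ hG₁
      rwa [hz₁] at h
    have heq : ∫ y, S' z y ∂F = ∫ y, S' (T' F) y ∂F := by
      have hle : ∫ y, S' z y ∂F ≤ ∫ y, S' (T' F) y ∂F := by
        rw [hexp z, hexp (T' F)]
        have h01 : (0:ℝ) ≤ 1 - l := by linarith [hl.2]
        exact add_le_add (mul_le_mul_of_nonneg_left h3 hl.1.le)
          (mul_le_mul_of_nonneg_left h2 h01)
      linarith
    exact (hS'strict z F hmem heq).symm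
  have hGmax : ∀ G₀ ∈ 𝓖, ∀ G₁ ∈ 𝓖, ∀ l ∈ Set.Ioo (0:ℝ) 1,
      T (mix G₁ G₀ l) = max (T G₀) (T G₁) := by
    rintro G₀ ⟨hG₀, _⟩ G₁ ⟨hG₁, _⟩ l hl
    exact hmax G₀ hG₀ G₁ hG₁ l hl
  have hF₀G : F₀ ∈ 𝓖 := ⟨hF₀, hT'F₀⟩
  have hF₁G : F₁ ∈ 𝓖 := ⟨hF₁, rfl⟩
  rintro ⟨S, hS⟩
  rcases lt_trichotomy (T F₀) (T F₁) with h | h | h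
  · exact max_aux 𝓖 T hGconv hGmax hF₀G hF₁G h S hS
  · exact hTne h
  · exact max_aux 𝓖 T hGconv hGmax hF₁G hF₀G h S hS
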